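/- Let R be an integral domain and M a maximal ideal of R with M nonzero. Then M is a molecule of R if and only if M is not idempotent (M ≠ M²). -/

import Mathlib

/-- A nonzero maximal ideal of a domain is a molecule iff it is not idempotent. -/
theorem stmt_9 {R : Type*} [CommRing R] [IsDomain R] (M : Ideal R)
    (hne : M ≠ ⊥) (hM : M.IsMaximal) :
    (∀ J K : Ideal R, M = J * K → J = ⊤ ∨ K = ⊤) ↔ M ≠ M ^ 2 := by
  constructor
  · intro h hsq
    rcases h M M (hsq.trans (sq M)) with h' | h' <;> exact hM.ne_top h'
  · intro h J K hJK
    by_cases hJ : J = ⊤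
    · exact Or.inl hJ
    by_cases hK : K = ⊤
    · exact Or.inr hK
    have hMJ : M ≤ J := hJK ▸ Ideal.mul_le_left
    have hMK : M ≤ K := hJK ▸ Ideal.mul_le_right
    have hJ' : M = J := hM.eq_of_le hJ hMJ
    have hK' : M = K := hM.eq_of_le hK hMK
    exact absurd (by rw [← hJ', ← hK'] at hJK; rw [sq]; exact hJK) h
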